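/- Let P be the Petersen graph and F a field of characteristic 0. Then there are exactly fifteen one-dimensional subspaces ⟨u⟩ of the space of functions V(P) → F such that the support of u² has exactly 3 edges; namely, the spans of the indicator functions of the ten vertices are ten of them, and there are exactly five further such spans. -/

import Mathlib

/-- `edgeVal u e` is the sum of the values of `u` at the two endpoints of `e`,
written `λ_e(u)` in the paper. -/
def edgeVal {V F : Type*} [Field F] (u : V → F) : Sym2 V → F :=
  Sym2.lift ⟨fun x y => u x + u y, fun _ _ => add_comm _ _⟩

/-- The vertices of the Petersen graph: 2-element subsets of a 5-element set. -/
abbrev PetersenVertex : Type := {s : Finset (Fin 5) // s.card = 2}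

/-- The Petersen graph: two vertices are adjacent iff they are disjoint pairs. -/
def Petersen : SimpleGraph PetersenVertex where
  Adj a b := Disjoint a.1 b.1
  symm := ⟨fun _ _ h => h.symm⟩
  loopless := ⟨by
    intro a h
    have h' : a.1 = ∅ := disjoint_self.mp h
    have h2 := a.2
    rw [h'] at h2
    simp at h2⟩

instance : DecidableRel Petersen.Adj := fun a b =>
  inferInstanceAs (Decidable (Disjoint a.1 b.1))

namespace PetersenAux
def vTab : Fin 10 → Fin 5 × Fin 5 := fun w => match w with
  | 0 => (0, 1)
  | 1 => (0, 2)
  | 2 => (0, 3)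
  | 3 => (0, 4)
  | 4 => (1, 2)
  | 5 => (1, 3)
  | 6 => (1, 4)
  | 7 => (2, 3)
  | 8 => (2, 4)
  | 9 => (3, 4)

def eTab : Fin 15 → Fin 10 × Fin 10 := fun k => match k with
  | 0 => (0, 7)
  | 1 => (0, 8)
  | 2 => (0, 9)
  | 3 => (1, 5)
  | 4 => (1, 6)
  | 5 => (1, 9)
  | 6 => (2, 4)
  | 7 => (2, 6)
  | 8 => (2, 8)
  | 9 => (3, 4)
  | 10 => (3, 5)
  | 11 => (3, 7)
  | 12 => (4, 9)
  | 13 => (5, 8)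
  | 14 => (6, 7)

def pentL : List (Fin 10 × Fin 10 × Fin 10 × Fin 10 × Fin 10) := [
  (0, 7, 3, 4, 9),
  (0, 7, 3, 5, 8),
  (0, 7, 6, 1, 9),
  (0, 7, 6, 2, 8),
  (0, 8, 2, 4, 9),
  (0, 8, 5, 1, 9),
  (1, 5, 3, 4, 9),
  (1, 5, 3, 7, 6),
  (1, 5, 8, 2, 6),
  (1, 6, 2, 4, 9),
  (2, 4, 3, 5, 8),
  (2, 4, 3, 7, 6)
]

def memT (i : Fin 5) (w : Fin 10) : Bool := i = (vTab w).1 || i = (vTab w).2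

def adjB (w z : Fin 10) : Bool :=
  (vTab w).1 ≠ (vTab z).1 && (vTab w).1 ≠ (vTab z).2 &&
  (vTab w).2 ≠ (vTab z).1 && (vTab w).2 ≠ (vTab z).2

def avT (i : Fin 5) (k : Fin 15) : Bool := !(memT i (eTab k).1) && !(memT i (eTab k).2)

def incT (v : Fin 10) (k : Fin 15) : Bool := (eTab k).1 = v || (eTab k).2 = v

def pairNE (x y : Fin 10) (k : Fin 15) : Bool :=
  !((eTab k).1 = x && (eTab k).2 = y) && !((eTab k).1 = y && (eTab k).2 = x)

def pentHas (p : Fin 10 × Fin 10 × Fin 10 × Fin 10 × Fin 10) (w : Fin 10) : Bool :=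
  w = p.1 || w = p.2.1 || w = p.2.2.1 || w = p.2.2.2.1 || w = p.2.2.2.2

def pentAdj (p : Fin 10 × Fin 10 × Fin 10 × Fin 10 × Fin 10) : Bool :=
  adjB p.1 p.2.1 && adjB p.2.1 p.2.2.1 && adjB p.2.2.1 p.2.2.2.1 &&
  adjB p.2.2.2.1 p.2.2.2.2 && adjB p.2.2.2.2 p.1

def pentEdgeNE (p : Fin 10 × Fin 10 × Fin 10 × Fin 10 × Fin 10) (k : Fin 15) : Bool :=
  pairNE p.1 p.2.1 k && pairNE p.2.1 p.2.2.1 k && pairNE p.2.2.1 p.2.2.2.1 k &&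
  pairNE p.2.2.2.1 p.2.2.2.2 k && pairNE p.2.2.2.2 p.1 k

def pentNotIn (p : Fin 10 × Fin 10 × Fin 10 × Fin 10 × Fin 10) (a b c : Fin 15) : Bool :=
  pentEdgeNE p a && pentEdgeNE p b && pentEdgeNE p c

def Z0 (a b c : Fin 15) (w : Fin 10) : Bool :=
  pentL.any fun p => pentHas p w && pentNotIn p a b c

def pairNotIn (x y : Fin 10) (a b c : Fin 15) : Bool :=
  pairNE x y a && pairNE x y b && pairNE x y c

def Z1 (a b c : Fin 15) (w : Fin 10) : Bool :=
  Z0 a b c w || (List.finRange 10).any fun z => adjB w z && pairNotIn w z a b c && Z0 a b c z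

def zeroEdge (a b c : Fin 15) (k : Fin 15) : Bool :=
  Z1 a b c (eTab k).1 && Z1 a b c (eTab k).2

def mainCheck (a b c : Fin 15) : Bool :=
  ((List.finRange 5).any fun i => avT i a && avT i b && avT i c) ||
  ((List.finRange 10).any fun v => incT v a && incT v b && incT v c) ||
  zeroEdge a b c a || zeroEdge a b c b || zeroEdge a b c c

set_option maxRecDepth 100000 in
theorem D3 : ∀ a b c : Fin 15, a < b → b < c → mainCheck a b c = true := by decide

theorem mainCheck_symm : ∀ a b c : Fin 15, a ≠ b → a ≠ c → b ≠ c → ∃ a' b' c' : Fin 15,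
    a' < b' ∧ b' < c' ∧ ({a', b', c'} : Finset (Fin 15)) = {a, b, c} := by
  intro a b c hab hac hbc
  rcases lt_trichotomy a b with h1 | h1 | h1
  · rcases lt_trichotomy b c with h2 | h2 | h2
    · exact ⟨a, b, c, h1, h2, rfl⟩
    · exact absurd h2 hbc
    · rcases lt_trichotomy a c with h3 | h3 | h3
      · exact ⟨a, c, b, h3, h2, by ext x; simp; tauto⟩
      · exact absurd h3 hac
      · exact ⟨c, a, b, h3, h1, by ext x; simp; tauto⟩
  · exact absurd h1 hab
  · rcases lt_trichotomy a c with h2 | h2 | h2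
    · exact ⟨b, a, c, h1, h2, by ext x; simp; tauto⟩
    · exact absurd h2 hac
    · rcases lt_trichotomy b c with h3 | h3 | h3
      · exact ⟨b, c, a, h3, h2, by ext x; simp; tauto⟩
      · exact absurd h3 hbc
      · exact ⟨c, b, a, h3, h1, by ext x; simp; tauto⟩

end PetersenAux
namespace PetersenAux

theorem vE_card : ∀ w : Fin 10, ({(vTab w).1, (vTab w).2} : Finset (Fin 5)).card = 2 := by decide

def vE (w : Fin 10) : PetersenVertex := ⟨{(vTab w).1, (vTab w).2}, vE_card w⟩

theorem d_adj : ∀ w z : Fin 10, adjB w z = true ↔ Petersen.Adj (vE w) (vE z) := by decide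

theorem d_mem : ∀ (i : Fin 5) (w : Fin 10), memT i w = true ↔ i ∈ (vE w).1 := by decide

theorem d_vE_inj : ∀ w w' : Fin 10, vE w = vE w' → w = w' := by decide

theorem d_vE_surj : ∀ x : PetersenVertex, ∃ w : Fin 10, vE w = x := by decide

theorem d_eAdj : ∀ k : Fin 15, adjB (eTab k).1 (eTab k).2 = true := by decide

theorem d_edge_repr0 : ∀ x y : PetersenVertex, Petersen.Adj x y → ∃ k : Fin 15,
    (vE (eTab k).1 = x ∧ vE (eTab k).2 = y) ∨ (vE (eTab k).1 = y ∧ vE (eTab k).2 = x) := by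
  decide

theorem d_pent : pentL.all (fun p => pentAdj p) = true := by decide

theorem d_star : ∀ v w : Fin 10, w ≠ v →
    (pentL.any fun p => pentHas p w && !(pentHas p v)) = true := by decide

theorem d_starEdge : ∀ (v : Fin 10) (k : Fin 15), incT v k = true →
    (pentL.all fun p => pentHas p v || pentEdgeNE p k) = true := by decide

theorem d_eTab_inj : ∀ k k' : Fin 15,
    (((eTab k).1 = (eTab k').1 ∧ (eTab k).2 = (eTab k').2) ∨
      ((eTab k).1 = (eTab k').2 ∧ (eTab k).2 = (eTab k').1)) → k = k' := by decide

theorem d_av_edge : ∀ (i : Fin 5) (w z : Fin 10) (k : Fin 15),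
    avT i k = true → memT i w = true → pairNE w z k = true := by decide

theorem d_av_edge2 : ∀ (i : Fin 5) (w z : Fin 10) (k : Fin 15),
    avT i k = true → memT i z = true → pairNE w z k = true := by decide

theorem d_P1 : ∀ (i : Fin 5) (v w : Fin 10), memT i v = true → memT i w = true → v ≠ w →
    ∃ z : Fin 10, adjB v z = true ∧ adjB w z = true := by decide

theorem d_P2 : ∀ (i : Fin 5) (v w : Fin 10), memT i v = true → memT i w = false →
    ∃ z : Fin 10, adjB w z = true ∧ memT i z = true := by decide

theorem d_P0 : ∀ i : Fin 5, ∃ r : Fin 10, memT i r = true := by decide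

theorem d_avT_card :
    ∀ i : Fin 5, ((Finset.univ : Finset (Fin 15)).filter (fun k => avT i k = true)).card = 3 := by
  decide

theorem d_memOnce : ∀ (i : Fin 5) (k : Fin 15),
    memT i (eTab k).1 = true → memT i (eTab k).2 = false := by decide

theorem d_deg : ∀ v : PetersenVertex, Petersen.degree v = 3 := by decide

theorem d_ij : ∀ i j : Fin 5, i ≠ j →
    ∃ w w' : Fin 10, (memT i w = true ∧ memT j w = true) ∧
      (memT i w' = true ∧ memT j w' = false) := by decide

theorem d_exists_ne : ∀ v : PetersenVertex, ∃ x : PetersenVertex, x ≠ v := by decide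

theorem d_cardPV : (Finset.univ : Finset PetersenVertex).card = 10 := by decide

end PetersenAux
namespace PetersenAux

variable {F : Type*} [Field F] [CharZero F]

def deltaF (v : PetersenVertex) : PetersenVertex → F := fun x => if x = v then 1 else 0

def epsF (i : Fin 5) : PetersenVertex → F := fun v => if i ∈ v.1 then 1 else -1

def sE (k : Fin 15) : Sym2 PetersenVertex := s(vE (eTab k).1, vE (eTab k).2)

lemma edgeVal_mk (u : PetersenVertex → F) (x y : PetersenVertex) :
    edgeVal u s(x, y) = u x + u y := rfl

def supp (u : PetersenVertex → F) : Set (Sym2 PetersenVertex) :=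
  {e : Sym2 PetersenVertex | e ∈ Petersen.edgeSet ∧ edgeVal u e ≠ 0}

lemma edge_repr (e : Sym2 PetersenVertex) (he : e ∈ Petersen.edgeSet) :
    ∃ k : Fin 15, e = sE k := by
  induction e using Sym2.ind with
  | _ x y =>
    obtain ⟨k, hk⟩ := d_edge_repr0 x y (Petersen.mem_edgeSet.mp he)
    rcases hk with ⟨h1, h2⟩ | ⟨h1, h2⟩
    · exact ⟨k, by rw [sE, h1, h2]⟩
    · exact ⟨k, by rw [sE, h1, h2, Sym2.eq_swap]⟩

lemma sE_mem_edgeSet (k : Fin 15) : sE k ∈ Petersen.edgeSet :=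
  Petersen.mem_edgeSet.mpr ((d_adj _ _).mp (d_eAdj k))

lemma sE_ne_of_pairNE {w z : Fin 10} {k : Fin 15} (h : pairNE w z k = true) :
    s(vE w, vE z) ≠ sE k := by
  intro heq
  rw [sE, Sym2.eq_iff] at heq
  simp only [pairNE, Bool.and_eq_true, Bool.not_eq_true', Bool.and_eq_false_iff,
    decide_eq_false_iff_not] at h
  rcases heq with ⟨h1, h2⟩ | ⟨h1, h2⟩
  · rcases h.1 with h' | h'
    · exact h' (d_vE_inj _ _ h1.symm)
    · exact h' (d_vE_inj _ _ h2.symm)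
  · rcases h.2 with h' | h'
    · exact h' (d_vE_inj _ _ h2.symm)
    · exact h' (d_vE_inj _ _ h1.symm)

lemma sE_inj : Function.Injective sE := by
  intro k k' h
  rw [sE, sE, Sym2.eq_iff] at h
  apply d_eTab_inj
  rcases h with ⟨h1, h2⟩ | ⟨h1, h2⟩
  · exact Or.inl ⟨d_vE_inj _ _ h1, d_vE_inj _ _ h2⟩
  · exact Or.inr ⟨d_vE_inj _ _ h1, d_vE_inj _ _ h2⟩

lemma cyc5 {q1 q2 q3 q4 q5 : F} (h1 : q1 + q2 = 0) (h2 : q2 + q3 = 0) (h3 : q3 + q4 = 0)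
    (h4 : q4 + q5 = 0) (h5 : q5 + q1 = 0) :
    q1 = 0 ∧ q2 = 0 ∧ q3 = 0 ∧ q4 = 0 ∧ q5 = 0 := by
  have e1 : (2 : F) * q1 = 0 := by linear_combination h1 - h2 + h3 - h4 + h5
  have hq1 : q1 = 0 := (mul_eq_zero.mp e1).resolve_left two_ne_zero
  refine ⟨hq1, by linear_combination h1 - hq1, by linear_combination -h1 + h2 + hq1,
    by linear_combination h1 - h2 + h3 - hq1, by linear_combination h5 - hq1⟩

lemma pent_zero {u : PetersenVertex → F} {a b c : Fin 15}
    (hz : ∀ w z : Fin 10, adjB w z = true → pairNotIn w z a b c = true →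
      edgeVal u s(vE w, vE z) = 0)
    {p : Fin 10 × Fin 10 × Fin 10 × Fin 10 × Fin 10} (hpL : p ∈ pentL)
    (hNI : pentNotIn p a b c = true) {w : Fin 10} (hHas : pentHas p w = true) :
    u (vE w) = 0 := by
  have hadj : pentAdj p = true := List.all_eq_true.mp d_pent p hpL
  obtain ⟨p1, p2, p3, p4, p5⟩ := p
  simp only [pentAdj, Bool.and_eq_true] at hadj
  obtain ⟨⟨⟨⟨a12, a23⟩, a34⟩, a45⟩, a51⟩ := hadj
  simp only [pentNotIn, pentEdgeNE, Bool.and_eq_true] at hNI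
  obtain ⟨⟨⟨⟨⟨⟨na1, na2⟩, na3⟩, na4⟩, na5⟩,
    ⟨⟨⟨⟨nb1, nb2⟩, nb3⟩, nb4⟩, nb5⟩⟩, ⟨⟨⟨⟨nc1, nc2⟩, nc3⟩, nc4⟩, nc5⟩⟩ := hNI
  have h12 : u (vE p1) + u (vE p2) = 0 := by
    rw [← edgeVal_mk]; exact hz _ _ a12 (by simp [pairNotIn, na1, nb1, nc1])
  have h23 : u (vE p2) + u (vE p3) = 0 := by
    rw [← edgeVal_mk]; exact hz _ _ a23 (by simp [pairNotIn, na2, nb2, nc2])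
  have h34 : u (vE p3) + u (vE p4) = 0 := by
    rw [← edgeVal_mk]; exact hz _ _ a34 (by simp [pairNotIn, na3, nb3, nc3])
  have h45 : u (vE p4) + u (vE p5) = 0 := by
    rw [← edgeVal_mk]; exact hz _ _ a45 (by simp [pairNotIn, na4, nb4, nc4])
  have h51 : u (vE p5) + u (vE p1) = 0 := by
    rw [← edgeVal_mk]; exact hz _ _ a51 (by simp [pairNotIn, na5, nb5, nc5])
  obtain ⟨hq1, hq2, hq3, hq4, hq5⟩ := cyc5 h12 h23 h34 h45 h51
  simp only [pentHas, Bool.or_eq_true, decide_eq_true_eq] at hHas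
  rcases hHas with ((((rfl | rfl) | rfl) | rfl) | rfl) <;> assumption

theorem classify {u : PetersenVertex → F} (h3 : (supp u).ncard = 3) :
    (∃ v : PetersenVertex, u = u v • deltaF v) ∨
      (∃ (i : Fin 5) (r : Fin 10), memT i r = true ∧ u = u (vE r) • epsF i) := by
  classical
  have hfin : (supp u).Finite := Set.toFinite _
  rw [Set.ncard_eq_toFinset_card _ hfin] at h3
  obtain ⟨E1, E2, E3, h12, h13, h23, hset⟩ := Finset.card_eq_three.mp h3
  have hmem : ∀ e, e ∈ supp u ↔ e = E1 ∨ e = E2 ∨ e = E3 := by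
    intro e
    rw [← hfin.mem_toFinset, hset]
    simp
  have hE1 : E1 ∈ supp u := (hmem E1).mpr (Or.inl rfl)
  have hE2 : E2 ∈ supp u := (hmem E2).mpr (Or.inr (Or.inl rfl))
  have hE3 : E3 ∈ supp u := (hmem E3).mpr (Or.inr (Or.inr rfl))
  obtain ⟨a0, ha0⟩ := edge_repr E1 hE1.1
  obtain ⟨b0, hb0⟩ := edge_repr E2 hE2.1
  obtain ⟨c0, hc0⟩ := edge_repr E3 hE3.1
  have hab0 : a0 ≠ b0 := fun h => h12 (by rw [ha0, hb0, h])
  have hac0 : a0 ≠ c0 := fun h => h13 (by rw [ha0, hc0, h])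
  have hbc0 : b0 ≠ c0 := fun h => h23 (by rw [hb0, hc0, h])
  obtain ⟨a, b, c, hab, hbc, hsetabc⟩ := mainCheck_symm a0 b0 c0 hab0 hac0 hbc0
  have habc0 : ∀ k : Fin 15, (k = a ∨ k = b ∨ k = c) ↔ (k = a0 ∨ k = b0 ∨ k = c0) := by
    intro k
    have h1 : k ∈ ({a, b, c} : Finset (Fin 15)) ↔ k ∈ ({a0, b0, c0} : Finset (Fin 15)) := by
      rw [hsetabc]
    simpa using h1
  have hSEmem : ∀ e, e ∈ supp u ↔ (e = sE a ∨ e = sE b ∨ e = sE c) := by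
    intro e
    rw [hmem, ha0, hb0, hc0]
    constructor
    · rintro (h | h | h)
      · obtain rfl : e = sE a0 := h
        have := (habc0 a0).mpr (Or.inl rfl)
        rcases this with rfl | rfl | rfl <;> tauto
      · obtain rfl : e = sE b0 := h
        have := (habc0 b0).mpr (Or.inr (Or.inl rfl))
        rcases this with rfl | rfl | rfl <;> tauto
      · obtain rfl : e = sE c0 := h
        have := (habc0 c0).mpr (Or.inr (Or.inr rfl))
        rcases this with rfl | rfl | rfl <;> tauto
    · rintro (rfl | rfl | rfl)
      · rcases (habc0 a).mp (Or.inl rfl) with rfl | rfl | rfl <;> tauto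
      · rcases (habc0 b).mp (Or.inr (Or.inl rfl)) with rfl | rfl | rfl <;> tauto
      · rcases (habc0 c).mp (Or.inr (Or.inr rfl)) with rfl | rfl | rfl <;> tauto
  have hEa : edgeVal u (sE a) ≠ 0 := ((hSEmem (sE a)).mpr (Or.inl rfl)).2
  have hEb : edgeVal u (sE b) ≠ 0 := ((hSEmem (sE b)).mpr (Or.inr (Or.inl rfl))).2
  have hEc : edgeVal u (sE c) ≠ 0 := ((hSEmem (sE c)).mpr (Or.inr (Or.inr rfl))).2
  have hz : ∀ w z : Fin 10, adjB w z = true → pairNotIn w z a b c = true →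
      edgeVal u s(vE w, vE z) = 0 := by
    intro w z hadj hni
    by_contra hval
    have hsupp : s(vE w, vE z) ∈ supp u :=
      ⟨Petersen.mem_edgeSet.mpr ((d_adj _ _).mp hadj), hval⟩
    have hni' := hni
    simp only [pairNotIn, Bool.and_eq_true] at hni'
    rcases (hSEmem _).mp hsupp with h | h | h
    · exact sE_ne_of_pairNE hni'.1.1 h
    · exact sE_ne_of_pairNE hni'.1.2 h
    · exact sE_ne_of_pairNE hni'.2 h
  have hZ0 : ∀ w, Z0 a b c w = true → u (vE w) = 0 := by
    intro w h
    rw [Z0, List.any_eq_true] at h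
    obtain ⟨p, hpL, hp⟩ := h
    rw [Bool.and_eq_true] at hp
    exact pent_zero hz hpL hp.2 hp.1
  have hZ1 : ∀ w, Z1 a b c w = true → u (vE w) = 0 := by
    intro w h
    rw [Z1, Bool.or_eq_true] at h
    rcases h with h | h
    · exact hZ0 w h
    · rw [List.any_eq_true] at h
      obtain ⟨z, _, hzp⟩ := h
      rw [Bool.and_eq_true, Bool.and_eq_true] at hzp
      obtain ⟨⟨hadj, hni⟩, hz0⟩ := hzp
      have huz : u (vE z) = 0 := hZ0 z hz0
      have := hz w z hadj hni
      rw [edgeVal_mk, huz, add_zero] at this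
      exact this
  have hZE : ∀ k : Fin 15, zeroEdge a b c k = true → edgeVal u (sE k) = 0 := by
    intro k h
    rw [zeroEdge, Bool.and_eq_true] at h
    rw [sE, edgeVal_mk, hZ1 _ h.1, hZ1 _ h.2, add_zero]
  have hmc := D3 a b c hab hbc
  rw [mainCheck, Bool.or_eq_true, Bool.or_eq_true, Bool.or_eq_true, Bool.or_eq_true] at hmc
  rcases hmc with ((((hTi | hStar) | hza) | hzb) | hzc)
  · -- T = T_i case
    rw [List.any_eq_true] at hTi
    obtain ⟨i, _, hi⟩ := hTi
    rw [Bool.and_eq_true, Bool.and_eq_true] at hi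
    obtain ⟨⟨hia, hib⟩, hic⟩ := hi
    have hzi : ∀ w z : Fin 10, adjB w z = true → (memT i w = true ∨ memT i z = true) →
        edgeVal u s(vE w, vE z) = 0 := by
      intro w z hadj hm
      apply hz w z hadj
      rcases hm with hm | hm
      · simp [pairNotIn, d_av_edge i w z a hia hm, d_av_edge i w z b hib hm,
          d_av_edge i w z c hic hm]
      · simp [pairNotIn, d_av_edge2 i w z a hia hm, d_av_edge2 i w z b hib hm,
          d_av_edge2 i w z c hic hm]
    have path1 : ∀ v w : Fin 10, memT i v = true → memT i w = true →
        u (vE v) = u (vE w) := by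
      intro v w hv hw
      by_cases hvw : v = w
      · rw [hvw]
      · obtain ⟨z, hz1, hz2⟩ := d_P1 i v w hv hw hvw
        have e1 := hzi v z hz1 (Or.inl hv)
        have e2 := hzi w z hz2 (Or.inl hw)
        rw [edgeVal_mk] at e1 e2
        linear_combination e1 - e2
    have path2 : ∀ v w : Fin 10, memT i v = true → memT i w = false →
        u (vE w) = -u (vE v) := by
      intro v w hv hw
      obtain ⟨z, hz1, hz2⟩ := d_P2 i v w hv hw
      have e1 := hzi w z hz1 (Or.inr hz2)
      rw [edgeVal_mk] at e1
      have e2 := path1 z v hz2 hv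
      linear_combination e1 - e2
    obtain ⟨r, hr⟩ := d_P0 i
    refine Or.inr ⟨i, r, hr, funext fun x => ?_⟩
    obtain ⟨w, rfl⟩ := d_vE_surj x
    by_cases hm : memT i w = true
    · have h1 := path1 r w hr hm
      have hiw : i ∈ (vE w).1 := (d_mem i w).mp hm
      simpa [epsF, hiw] using h1.symm
    · have hm' : memT i w = false := by simpa using hm
      have h2 := path2 r w hr hm'
      have hiw : i ∉ (vE w).1 := fun h => by simp [(d_mem i w).mpr h] at hm'
      simpa [epsF, hiw] using h2
  · -- star case
    rw [List.any_eq_true] at hStar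
    obtain ⟨v, _, hv⟩ := hStar
    rw [Bool.and_eq_true, Bool.and_eq_true] at hv
    obtain ⟨⟨hva, hvb⟩, hvc⟩ := hv
    refine Or.inl ⟨vE v, funext fun x => ?_⟩
    obtain ⟨w, rfl⟩ := d_vE_surj x
    by_cases hw : w = v
    · subst hw
      simp [deltaF]
    · have h0 : u (vE w) = 0 := by
        have hst := d_star v w hw
        rw [List.any_eq_true] at hst
        obtain ⟨p, hpL, hp⟩ := hst
        rw [Bool.and_eq_true, Bool.not_eq_true'] at hp
        obtain ⟨hHas, hAv⟩ := hp
        have hNI : pentNotIn p a b c = true := by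
          have hsa := List.all_eq_true.mp (d_starEdge v a hva) p hpL
          have hsb := List.all_eq_true.mp (d_starEdge v b hvb) p hpL
          have hsc := List.all_eq_true.mp (d_starEdge v c hvc) p hpL
          rw [Bool.or_eq_true] at hsa hsb hsc
          rw [hAv] at hsa hsb hsc
          simp only [Bool.false_eq_true, false_or] at hsa hsb hsc
          rw [pentNotIn, hsa, hsb, hsc]
          rfl
        exact pent_zero hz hpL hNI hHas
      have hne : vE w ≠ vE v := fun h => hw (d_vE_inj _ _ h)
      simpa [deltaF, hne] using h0
  · exact absurd (hZE _ hza) hEa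
  · exact absurd (hZE _ hzb) hEb
  · exact absurd (hZE _ hzc) hEc

end PetersenAux
namespace PetersenAux

variable {F : Type*} [Field F] [CharZero F]

lemma edgeVal_zero (e : Sym2 PetersenVertex) : edgeVal (0 : PetersenVertex → F) e = 0 := by
  induction e using Sym2.ind with
  | _ x y => rw [edgeVal_mk]; simp

lemma supp_zero : supp (0 : PetersenVertex → F) = ∅ := by
  ext e
  simp [supp, edgeVal_zero]

lemma supp_delta (v : PetersenVertex) :
    supp (deltaF v : PetersenVertex → F) = Petersen.incidenceSet v := by
  ext e
  induction e using Sym2.ind with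
  | _ x y =>
    show _ ∧ _ ↔ _
    rw [SimpleGraph.incidenceSet]
    simp only [Set.mem_setOf_eq]
    constructor
    · rintro ⟨he, hval⟩
      refine ⟨he, ?_⟩
      rw [edgeVal_mk] at hval
      by_cases hx : x = v
      · exact Sym2.mem_iff.mpr (Or.inl hx.symm)
      · by_cases hy : y = v
        · exact Sym2.mem_iff.mpr (Or.inr hy.symm)
        · exfalso; apply hval; simp [deltaF, hx, hy]
    · rintro ⟨he, hv⟩
      refine ⟨he, ?_⟩
      have hxy : x ≠ y := (Petersen.mem_edgeSet.mp he).ne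
      rw [edgeVal_mk]
      rcases Sym2.mem_iff.mp hv with rfl | rfl
      · simp [deltaF, Ne.symm hxy]
      · simp [deltaF, hxy]

lemma ncard_supp_delta (v : PetersenVertex) :
    (supp (deltaF v : PetersenVertex → F)).ncard = 3 := by
  rw [supp_delta, Set.ncard_eq_toFinset_card', Set.toFinset_card,
    SimpleGraph.card_incidenceSet_eq_degree]
  exact d_deg v

def TiFin (i : Fin 5) : Finset (Sym2 PetersenVertex) :=
  (Finset.univ.filter (fun k => avT i k = true)).image sE

lemma edgeVal_eps_eq (i : Fin 5) (k : Fin 15) :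
    (avT i k = true ∧ edgeVal (epsF i : PetersenVertex → F) (sE k) = -2) ∨
      (avT i k = false ∧ edgeVal (epsF i : PetersenVertex → F) (sE k) = 0) := by
  have hmem1 := d_mem i (eTab k).1
  have hmem2 := d_mem i (eTab k).2
  rw [sE, edgeVal_mk]
  cases h1 : memT i (eTab k).1 <;> cases h2 : memT i (eTab k).2
  · left
    have n1 : i ∉ (vE (eTab k).1).1 := fun h => by rw [hmem1.mpr h] at h1; cases h1
    have n2 : i ∉ (vE (eTab k).2).1 := fun h => by rw [hmem2.mpr h] at h2; cases h2
    constructor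
    · simp [avT, h1, h2]
    · simp [epsF, n1, n2]; norm_num
  · right
    have n1 : i ∉ (vE (eTab k).1).1 := fun h => by rw [hmem1.mpr h] at h1; cases h1
    have m2 : i ∈ (vE (eTab k).2).1 := hmem2.mp h2
    constructor
    · simp [avT, h2]
    · simp [epsF, n1, m2]
  · right
    have m1 : i ∈ (vE (eTab k).1).1 := hmem1.mp h1
    have n2 : i ∉ (vE (eTab k).2).1 := fun h => by rw [hmem2.mpr h] at h2; cases h2
    constructor
    · simp [avT, h1]
    · simp [epsF, m1, n2]
  · exact absurd h2 (by simp [d_memOnce i k h1])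

lemma supp_eps (i : Fin 5) :
    supp (epsF i : PetersenVertex → F) = ↑(TiFin i) := by
  ext e
  constructor
  · rintro ⟨he, hval⟩
    obtain ⟨k, rfl⟩ := edge_repr e he
    rcases edgeVal_eps_eq (F := F) i k with ⟨hav, _⟩ | ⟨_, hv0⟩
    · exact Finset.mem_coe.mpr (Finset.mem_image.mpr ⟨k, by simp [hav], rfl⟩)
    · exact absurd hv0 hval
  · intro he
    obtain ⟨k, hk, rfl⟩ := Finset.mem_image.mp (Finset.mem_coe.mp he)
    have hav : avT i k = true := by simpa using (Finset.mem_filter.mp hk).2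
    refine ⟨sE_mem_edgeSet k, ?_⟩
    rcases edgeVal_eps_eq (F := F) i k with ⟨_, hv⟩ | ⟨hav', _⟩
    · rw [hv]; norm_num
    · rw [hav] at hav'; cases hav'

lemma ncard_supp_eps (i : Fin 5) :
    (supp (epsF i : PetersenVertex → F)).ncard = 3 := by
  rw [supp_eps, Set.ncard_coe_finset, TiFin, Finset.card_image_of_injective _ sE_inj,
    d_avT_card]

lemma span_delta_inj (v w : PetersenVertex)
    (h : Submodule.span F {(deltaF v : PetersenVertex → F)} =
      Submodule.span F {(deltaF w : PetersenVertex → F)}) : v = w := by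
  by_contra hvw
  have hmem : (deltaF v : PetersenVertex → F) ∈
      Submodule.span F {(deltaF w : PetersenVertex → F)} :=
    h ▸ Submodule.mem_span_singleton_self _
  obtain ⟨c, hc⟩ := Submodule.mem_span_singleton.mp hmem
  have h1 := congrFun hc v
  simp [deltaF, hvw] at h1

lemma span_eps_inj (i j : Fin 5)
    (h : Submodule.span F {(epsF i : PetersenVertex → F)} =
      Submodule.span F {(epsF j : PetersenVertex → F)}) : i = j := by
  by_contra hij
  have hmem : (epsF i : PetersenVertex → F) ∈
      Submodule.span F {(epsF j : PetersenVertex → F)} :=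
    h ▸ Submodule.mem_span_singleton_self _
  obtain ⟨c, hc⟩ := Submodule.mem_span_singleton.mp hmem
  obtain ⟨w, w', ⟨hiw, hjw⟩, hiw', hjw'⟩ := d_ij i j hij
  have h1 := congrFun hc (vE w)
  have h2 := congrFun hc (vE w')
  have miw : i ∈ (vE w).1 := (d_mem i w).mp hiw
  have mjw : j ∈ (vE w).1 := (d_mem j w).mp hjw
  have miw' : i ∈ (vE w').1 := (d_mem i w').mp hiw'
  have mjw' : j ∉ (vE w').1 := fun hh => by rw [(d_mem j w').mpr hh] at hjw'; cases hjw'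
  simp [epsF, miw, mjw] at h1
  simp [epsF, miw', mjw'] at h2
  rw [h1] at h2
  norm_num at h2

lemma span_delta_ne_eps (v : PetersenVertex) (i : Fin 5) :
    Submodule.span F {(deltaF v : PetersenVertex → F)} ≠
      Submodule.span F {(epsF i : PetersenVertex → F)} := by
  intro h
  have hmem : (epsF i : PetersenVertex → F) ∈
      Submodule.span F {(deltaF v : PetersenVertex → F)} :=
    h ▸ Submodule.mem_span_singleton_self _
  obtain ⟨c, hc⟩ := Submodule.mem_span_singleton.mp hmem
  obtain ⟨x, hx⟩ := d_exists_ne v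
  have h1 := congrFun hc x
  by_cases hm : i ∈ x.1 <;> simp [deltaF, epsF, hx, hm] at h1

end PetersenAux
open PetersenAux in
theorem petersen_fifteen_weight_three_spans
    {F : Type*} [Field F] [CharZero F] :
    letI S : Set (Submodule F (PetersenVertex → F)) :=
      {W | ∃ u : PetersenVertex → F, W = Submodule.span F {u} ∧
        {e : Sym2 PetersenVertex | e ∈ Petersen.edgeSet ∧ edgeVal u e ≠ 0}.ncard = 3}
    letI vertexSpan : PetersenVertex → Submodule F (PetersenVertex → F) :=
      fun v => Submodule.span F {fun x => if x = v then (1 : F) else 0}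
    S.ncard = 15 ∧
      (∀ v : PetersenVertex, vertexSpan v ∈ S) ∧
      (Set.range vertexSpan).ncard = 10 ∧
      (S \ Set.range vertexSpan).ncard = 5 := by
  classical
  set DFin : Finset (Submodule F (PetersenVertex → F)) :=
    Finset.univ.image (fun v : PetersenVertex =>
      Submodule.span F {(deltaF v : PetersenVertex → F)}) with hDFin
  set EFin : Finset (Submodule F (PetersenVertex → F)) :=
    Finset.univ.image (fun i : Fin 5 =>
      Submodule.span F {(epsF i : PetersenVertex → F)}) with hEFin
  have hD_inj : Function.Injective (fun v : PetersenVertex =>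
      Submodule.span F {(deltaF v : PetersenVertex → F)}) :=
    fun v w h => span_delta_inj v w h
  have hE_inj : Function.Injective (fun i : Fin 5 =>
      Submodule.span F {(epsF i : PetersenVertex → F)}) :=
    fun i j h => span_eps_inj i j h
  have hdisj : Disjoint DFin EFin := by
    rw [Finset.disjoint_left]
    intro W hW hW'
    rw [hDFin, Finset.mem_image] at hW
    rw [hEFin, Finset.mem_image] at hW'
    obtain ⟨v, _, rfl⟩ := hW
    obtain ⟨i, _, hWi⟩ := hW'
    exact span_delta_ne_eps v i hWi.symm
  have hcard : (DFin ∪ EFin).card = 15 := by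
    rw [Finset.card_union_of_disjoint hdisj, hDFin, hEFin,
      Finset.card_image_of_injective _ hD_inj, Finset.card_image_of_injective _ hE_inj,
      d_cardPV]
    simp
  have hS : {W : Submodule F (PetersenVertex → F) | ∃ u : PetersenVertex → F,
      W = Submodule.span F {u} ∧
      {e : Sym2 PetersenVertex | e ∈ Petersen.edgeSet ∧ edgeVal u e ≠ 0}.ncard = 3} =
      ↑(DFin ∪ EFin) := by
    ext W
    constructor
    · rintro ⟨u, rfl, h3⟩
      have h3' : (supp u).ncard = 3 := h3
      rw [Finset.coe_union, Set.mem_union]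
      rcases classify h3' with ⟨v, hu⟩ | ⟨i, r, _, hu⟩
      · have hc : u v ≠ 0 := by
          intro h0
          rw [h0, zero_smul] at hu
          rw [hu, supp_zero, Set.ncard_empty] at h3'
          exact three_ne_zero h3'.symm
        have hspan : Submodule.span F {u} =
            Submodule.span F {(deltaF v : PetersenVertex → F)} := by
          rw [hu]
          exact Submodule.span_singleton_smul_eq (isUnit_iff_ne_zero.mpr hc) _
        left
        rw [Finset.mem_coe, hDFin, Finset.mem_image]
        exact ⟨v, Finset.mem_univ v, hspan.symm⟩
      · have hc : u (vE r) ≠ 0 := by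
          intro h0
          rw [h0, zero_smul] at hu
          rw [hu, supp_zero, Set.ncard_empty] at h3'
          exact three_ne_zero h3'.symm
        have hspan : Submodule.span F {u} =
            Submodule.span F {(epsF i : PetersenVertex → F)} := by
          rw [hu]
          exact Submodule.span_singleton_smul_eq (isUnit_iff_ne_zero.mpr hc) _
        right
        rw [Finset.mem_coe, hEFin, Finset.mem_image]
        exact ⟨i, Finset.mem_univ i, hspan.symm⟩
    · intro hW
      rw [Finset.coe_union, Set.mem_union, Finset.mem_coe, Finset.mem_coe, hDFin, hEFin,
        Finset.mem_image, Finset.mem_image] at hW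
      rcases hW with ⟨v, _, rfl⟩ | ⟨i, _, rfl⟩
      · exact ⟨deltaF v, rfl, ncard_supp_delta v⟩
      · exact ⟨epsF i, rfl, ncard_supp_eps i⟩
  have hR : Set.range (fun v : PetersenVertex =>
      Submodule.span F {fun x : PetersenVertex => if x = v then (1 : F) else 0}) =
      ↑DFin := by
    rw [hDFin, Finset.coe_image, Finset.coe_univ, Set.image_univ]
    rfl
  refine ⟨?_, ?_, ?_, ?_⟩
  · rw [hS, Set.ncard_coe_finset, hcard]
  · intro v
    exact ⟨deltaF v, rfl, ncard_supp_delta v⟩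
  · rw [hR, Set.ncard_coe_finset, hDFin, Finset.card_image_of_injective _ hD_inj, d_cardPV]
  · have hdiff : ({W : Submodule F (PetersenVertex → F) | ∃ u : PetersenVertex → F,
        W = Submodule.span F {u} ∧
        {e : Sym2 PetersenVertex | e ∈ Petersen.edgeSet ∧ edgeVal u e ≠ 0}.ncard = 3} \
        Set.range (fun v : PetersenVertex =>
          Submodule.span F {fun x : PetersenVertex => if x = v then (1 : F) else 0})) =
        ↑EFin := by
      rw [hS, hR, Finset.coe_union]
      ext W
      simp only [Set.mem_diff, Set.mem_union, Finset.mem_coe]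
      constructor
      · rintro ⟨hW | hW, hnotD⟩
        · exact absurd hW hnotD
        · exact hW
      · intro hW
        refine ⟨Or.inr hW, fun hD => ?_⟩
        rw [hDFin, Finset.mem_image] at hD
        rw [hEFin, Finset.mem_image] at hW
        obtain ⟨v, _, rfl⟩ := hD
        obtain ⟨i, _, hWi⟩ := hW
        exact span_delta_ne_eps v i hWi.symm
    rw [hdiff, Set.ncard_coe_finset, hEFin, Finset.card_image_of_injective _ hE_inj]
    simp
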